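/- arXiv:1103.0519 — 2 statements merged into one kernel-verified Lean document; each statement's English description precedes it below -/
import Mathlib

section
/- Let A, B be nonnegative quadratic forms on a common domain with A(f,f) > 0 for all f ≠ 0 in the domain, and suppose Hilbert's projective distance h is uniformly bounded on a family 𝔉 of such forms that is closed under the operation (A,B) ↦ (1+δ)B − λA for λ = inf(B|A) and every δ > 0. Then h(A,B) = 0 for all A, B ∈ 𝔉; i.e., every two elements of 𝔉 are positive scalar multiples of each other on the diagonal. -/
/-- The set of ratios `B(f)/A(f)` over nonzero `f` (equivalently `f` with `A(f) > 0`
for positive definite `A`). Here quadratic forms are recorded by their diagonals. -/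
def ratioSet {W : Type*} [Zero W] (A B : W → ℝ) : Set ℝ :=
  {r : ℝ | ∃ f : W, 0 < A f ∧ r = B f / A f}

/-- Hilbert's projective metric `h(A,B) = log(sup(B|A)/inf(B|A))`. -/
noncomputable def hilbertMetric {W : Type*} [Zero W] (A B : W → ℝ) : ℝ :=
  Real.log (sSup (ratioSet A B) / sInf (ratioSet A B))

/-- Let `𝔉` be a family of nonnegative quadratic forms, positive on
nonzero vectors, on which Hilbert's projective distance is uniformly bounded, and
which is closed under `(A,B) ↦ (1+δ)B − inf(B|A)·A` for every `δ > 0`.  Then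
`h(A,B) = 0` for all `A, B ∈ 𝔉`. -/
theorem stmt_5 {W : Type*} [AddCommGroup W] [Module ℝ W] [Nontrivial W]
    (𝔉 : Set (W → ℝ))
    (hpos : ∀ A ∈ 𝔉, ∀ f : W, 0 ≤ A f ∧ (f ≠ 0 → 0 < A f))
    (hbd : ∃ C : ℝ, ∀ A ∈ 𝔉, ∀ B ∈ 𝔉, hilbertMetric A B ≤ C)
    (hclosed : ∀ A ∈ 𝔉, ∀ B ∈ 𝔉, ∀ δ : ℝ, 0 < δ →
      (fun f => (1 + δ) * B f - sInf (ratioSet A B) * A f) ∈ 𝔉) :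
    ∀ A ∈ 𝔉, ∀ B ∈ 𝔉, hilbertMetric A B = 0 := by
  obtain ⟨C, hC⟩ := hbd
  intro A hA B hB
  obtain ⟨f0, hf0⟩ := exists_ne (0 : W)
  have hAf0 : 0 < A f0 := (hpos A hA f0).2 hf0
  have hSne : (ratioSet A B).Nonempty := ⟨B f0 / A f0, f0, hAf0, rfl⟩
  have hSbb : BddBelow (ratioSet A B) := by
    refine ⟨0, ?_⟩
    rintro r ⟨f, hf, rfl⟩
    exact div_nonneg (hpos B hB f).1 hf.le
  set μ := sSup (ratioSet A B) with hμ
  set lam := sInf (ratioSet A B) with hlam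
  have hlam0 : 0 ≤ lam := by
    apply le_csInf hSne
    rintro r ⟨f, hf, rfl⟩
    exact div_nonneg (hpos B hB f).1 hf.le
  by_cases hbdd : BddAbove (ratioSet A B)
  · have hle : lam ≤ μ := csInf_le_csSup hSne hSbb hbdd
    rcases eq_or_lt_of_le hlam0 with h0 | hlampos
    · show Real.log (μ / lam) = 0
      rw [← h0, div_zero, Real.log_zero]
    rcases eq_or_lt_of_le hle with heq | hlt
    · show Real.log (μ / lam) = 0
      rw [← heq, div_self hlampos.ne', Real.log_one]
    exfalso
    set δ := (μ - lam) / (2 * lam * Real.exp C) with hδdef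
    have hδ : 0 < δ := div_pos (by linarith) (by positivity)
    have hD := hclosed A hA B hB δ hδ
    set D := fun f => (1 + δ) * B f - lam * A f with hDdef
    have hT : ratioSet A D = (fun r => (1 + δ) * r - lam) '' (ratioSet A B) := by
      ext r
      constructor
      · rintro ⟨f, hf, rfl⟩
        refine ⟨B f / A f, ⟨f, hf, rfl⟩, ?_⟩
        simp only [hDdef]
        field_simp
      · rintro ⟨r', ⟨f, hf, rfl⟩, rfl⟩
        refine ⟨f, hf, ?_⟩
        simp only [hDdef]
        field_simp
    have hmono : Monotone (fun r : ℝ => (1 + δ) * r - lam) := by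
      intro a b hab
      simp only
      nlinarith
    have hcont : Continuous (fun r : ℝ => (1 + δ) * r - lam) := by continuity
    have hsup : sSup (ratioSet A D) = (1 + δ) * μ - lam := by
      rw [hT, ← Monotone.map_csSup_of_continuousAt hcont.continuousAt hmono hSne hbdd]
    have hinf : sInf (ratioSet A D) = δ * lam := by
      rw [hT, ← Monotone.map_csInf_of_continuousAt hcont.continuousAt hmono hSne hSbb]
      ring
    have harg : 0 < ((1 + δ) * μ - lam) / (δ * lam) := by
      apply div_pos (by nlinarith) (by positivity)
    have key : ((1 + δ) * μ - lam) / (δ * lam) ≤ Real.exp C := by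
      have h1 := hC A hA D hD
      unfold hilbertMetric at h1
      rw [hsup, hinf] at h1
      exact (Real.log_le_iff_le_exp harg).mp h1
    have hkey2 : (1 + δ) * μ - lam ≤ Real.exp C * (δ * lam) :=
      (div_le_iff₀ (by positivity)).mp key
    have heC : Real.exp C * (δ * lam) = (μ - lam) / 2 := by
      rw [hδdef]
      field_simp
    nlinarith
  · show Real.log (μ / lam) = 0
    rw [hμ, Real.sSup_of_not_bddAbove hbdd, zero_div, Real.log_zero]
end

section
/- Let E and F be measurable spaces with E₁ a standard Borel (separable metric) space. Given random variables X : Ω → E₁ and Z : Ω → E₂ on a probability space, there exists a jointly measurable F : E₂ × [0,1] → E₁ such that if U is uniform on [0,1] and independent of Z, then (F(Z,U), Z) has the same law as (X, Z). -/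
open MeasureTheory ProbabilityTheory Set

namespace Stmt13Aux

variable {E₂ : Type*} [MeasurableSpace E₂]

/-- The quantile function of the kernel `η`. -/
noncomputable def qf (η : Kernel E₂ ℝ) (p : E₂ × ℝ) : ℝ :=
  sInf {x : ℝ | ENNReal.ofReal p.2 ≤ η p.1 (Iic x)}

lemma cdf_mono (η : Kernel E₂ ℝ) (z : E₂) : Monotone (fun x : ℝ => η z (Iic x)) :=
  fun _ _ h => measure_mono (Iic_subset_Iic.2 h)

lemma bddBelow_S (η : Kernel E₂ ℝ) [IsMarkovKernel η] (z : E₂) {u : ℝ} (hu : 0 < u) :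
    BddBelow {x : ℝ | ENNReal.ofReal u ≤ η z (Iic x)} := by
  have hInt : (⋂ n : ℕ, Iic (-(n : ℝ))) = (∅ : Set ℝ) := by
    ext x
    simp only [mem_iInter, mem_Iic, mem_empty_iff_false, iff_false, not_forall]
    obtain ⟨n, hn⟩ := exists_nat_gt (-x)
    exact ⟨n, by push_cast; linarith⟩
  have htend : Filter.Tendsto (fun n : ℕ => η z (Iic (-(n : ℝ)))) Filter.atTop
      (nhds (η z (⋂ n : ℕ, Iic (-(n : ℝ))))) := by
    refine tendsto_measure_iInter_atTop (fun n => measurableSet_Iic.nullMeasurableSet)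
      (fun n m hnm => Iic_subset_Iic.2 (by push_cast; exact neg_le_neg (by exact_mod_cast hnm)))
      ⟨0, measure_ne_top _ _⟩
  rw [hInt] at htend
  simp only [measure_empty] at htend
  have hpos : (0 : ENNReal) < ENNReal.ofReal u := ENNReal.ofReal_pos.2 hu
  obtain ⟨n, hn⟩ := (htend.eventually_lt_const hpos).exists
  refine ⟨-(n : ℝ), fun s hs => ?_⟩
  by_contra h
  push_neg at h
  exact absurd (lt_of_le_of_lt (le_trans hs.out (cdf_mono η z h.le)) hn) (lt_irrefl _)

lemma iInter_Iic_add (t : ℝ) : (⋂ n : ℕ, Iic (t + 1 / ((n : ℝ) + 1))) = Iic t := by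
  ext x
  simp only [mem_iInter, mem_Iic]
  constructor
  · intro h
    refine le_of_forall_pos_le_add fun ε hε => ?_
    obtain ⟨n, hn⟩ := exists_nat_one_div_lt hε
    exact (h n).trans (by linarith)
  · intro h n
    have : (0 : ℝ) < 1 / ((n : ℝ) + 1) := by positivity
    linarith

lemma qf_mem (η : Kernel E₂ ℝ) [IsMarkovKernel η] (z : E₂) {u : ℝ} (hu : 0 < u)
    (hne : {x : ℝ | ENNReal.ofReal u ≤ η z (Iic x)}.Nonempty) :
    ENNReal.ofReal u ≤ η z (Iic (qf η (z, u))) := by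
  set S := {x : ℝ | ENNReal.ofReal u ≤ η z (Iic x)} with hS
  set t := sInf S with ht
  have h1 : ∀ n : ℕ, ENNReal.ofReal u ≤ η z (Iic (t + 1 / ((n : ℝ) + 1))) := by
    intro n
    have hlt : t < t + 1 / ((n : ℝ) + 1) := by
      have : (0 : ℝ) < 1 / ((n : ℝ) + 1) := by positivity
      linarith
    obtain ⟨s, hsS, hs⟩ := exists_lt_of_csInf_lt hne hlt
    exact le_trans hsS (cdf_mono η z hs.le)
  have h2 : Filter.Tendsto (fun n : ℕ => η z (Iic (t + 1 / ((n : ℝ) + 1)))) Filter.atTop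
      (nhds (η z (⋂ n : ℕ, Iic (t + 1 / ((n : ℝ) + 1))))) := by
    refine tendsto_measure_iInter_atTop (fun n => measurableSet_Iic.nullMeasurableSet)
      (fun n m hnm => Iic_subset_Iic.2 ?_) ⟨0, measure_ne_top _ _⟩
    have : 1 / ((m : ℝ) + 1) ≤ 1 / ((n : ℝ) + 1) := by
      apply one_div_le_one_div_of_le (by positivity)
      exact_mod_cast by omega
    linarith
  rw [iInter_Iic_add] at h2
  exact ge_of_tendsto h2 (Filter.Eventually.of_forall h1)

lemma qf_le_iff (η : Kernel E₂ ℝ) [IsMarkovKernel η] (z : E₂) {u x : ℝ} (hu : 0 < u)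
    (hne : {y : ℝ | ENNReal.ofReal u ≤ η z (Iic y)}.Nonempty) :
    qf η (z, u) ≤ x ↔ ENNReal.ofReal u ≤ η z (Iic x) := by
  constructor
  · intro h
    exact le_trans (qf_mem η z hu hne) (cdf_mono η z h)
  · intro h
    exact csInf_le (bddBelow_S η z hu) h

lemma qf_of_nonpos (η : Kernel E₂ ℝ) (z : E₂) {u : ℝ} (hu : u ≤ 0) : qf η (z, u) = 0 := by
  have : {x : ℝ | ENNReal.ofReal u ≤ η z (Iic x)} = univ := by
    ext x
    simp [ENNReal.ofReal_of_nonpos hu]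
  rw [qf, this]
  refine Real.sInf_of_not_bddBelow fun ⟨b, hb⟩ => ?_
  have := hb (mem_univ (b - 1))
  linarith

lemma qf_of_empty (η : Kernel E₂ ℝ) (z : E₂) {u : ℝ}
    (h : ¬ {x : ℝ | ENNReal.ofReal u ≤ η z (Iic x)}.Nonempty) : qf η (z, u) = 0 := by
  rw [not_nonempty_iff_eq_empty] at h
  rw [qf, h]
  exact Real.sInf_empty

lemma nonempty_iff_rat (η : Kernel E₂ ℝ) (z : E₂) (u : ℝ) :
    {x : ℝ | ENNReal.ofReal u ≤ η z (Iic x)}.Nonempty ↔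
      ∃ q : ℚ, ENNReal.ofReal u ≤ η z (Iic (q : ℝ)) := by
  constructor
  · rintro ⟨x, hx⟩
    obtain ⟨q, hq⟩ := exists_rat_gt x
    exact ⟨q, le_trans hx (cdf_mono η z hq.le)⟩
  · rintro ⟨q, hq⟩
    exact ⟨q, hq⟩

lemma measurable_qf (η : Kernel E₂ ℝ) [IsMarkovKernel η] : Measurable (qf η) := by
  apply measurable_of_Iic
  intro x
  set N : Set (E₂ × ℝ) := {p | ∃ q : ℚ, ENNReal.ofReal p.2 ≤ η p.1 (Iic (q : ℝ))} with hN
  have hNmeas : MeasurableSet N := by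
    have : N = ⋃ q : ℚ, {p : E₂ × ℝ | ENNReal.ofReal p.2 ≤ η p.1 (Iic (q : ℝ))} := by
      ext p; simp [hN]
    rw [this]
    refine MeasurableSet.iUnion fun q => ?_
    exact measurableSet_le (ENNReal.measurable_ofReal.comp measurable_snd)
      ((Kernel.measurable_coe η measurableSet_Iic).comp measurable_fst)
  have hcond : MeasurableSet {p : E₂ × ℝ | ENNReal.ofReal p.2 ≤ η p.1 (Iic x)} :=
    measurableSet_le (ENNReal.measurable_ofReal.comp measurable_snd)
      ((Kernel.measurable_coe η measurableSet_Iic).comp measurable_fst)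
  have hu0 : MeasurableSet {p : E₂ × ℝ | 0 < p.2} :=
    measurableSet_lt measurable_const measurable_snd
  by_cases h0x : (0 : ℝ) ≤ x
  · have : qf η ⁻¹' Iic x =
        ({p : E₂ × ℝ | 0 < p.2} ∩ N ∩ {p | ENNReal.ofReal p.2 ≤ η p.1 (Iic x)}) ∪
          ({p : E₂ × ℝ | 0 < p.2} ∩ N)ᶜ := by
      ext p
      obtain ⟨z, u⟩ := p
      simp only [mem_preimage, mem_Iic, mem_union, mem_inter_iff, mem_compl_iff, mem_setOf_eq]
      by_cases hu : 0 < u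
      · by_cases hne : {y : ℝ | ENNReal.ofReal u ≤ η z (Iic y)}.Nonempty
        · have hNe : (z, u) ∈ N := by
            rw [hN, mem_setOf_eq]
            exact (nonempty_iff_rat η z u).1 hne
          rw [qf_le_iff η z hu hne]
          tauto
        · have hNe : (z, u) ∉ N := fun h => hne ((nonempty_iff_rat η z u).2 h)
          rw [qf_of_empty η z hne]
          simp only [h0x, true_iff]
          right
          tauto
      · push_neg at hu
        rw [qf_of_nonpos η z hu]
        simp only [h0x, true_iff]
        right
        intro ⟨h1, _⟩
        linarith
    rw [this]
    exact ((hu0.inter hNmeas).inter hcond).union (hu0.inter hNmeas).compl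
  · have : qf η ⁻¹' Iic x =
        {p : E₂ × ℝ | 0 < p.2} ∩ N ∩ {p | ENNReal.ofReal p.2 ≤ η p.1 (Iic x)} := by
      ext p
      obtain ⟨z, u⟩ := p
      simp only [mem_preimage, mem_Iic, mem_inter_iff, mem_setOf_eq]
      by_cases hu : 0 < u
      · by_cases hne : {y : ℝ | ENNReal.ofReal u ≤ η z (Iic y)}.Nonempty
        · have hNe : (z, u) ∈ N := by
            rw [hN, mem_setOf_eq]
            exact (nonempty_iff_rat η z u).1 hne
          rw [qf_le_iff η z hu hne]
          simp [hNe, hu]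
        · have hNe : (z, u) ∉ N := fun h => hne ((nonempty_iff_rat η z u).2 h)
          rw [qf_of_empty η z hne]
          simp only [h0x, false_iff]
          tauto
      · push_neg at hu
        rw [qf_of_nonpos η z hu]
        simp only [h0x, false_iff]
        intro ⟨⟨h1, _⟩, _⟩
        linarith
    rw [this]
    exact (hu0.inter hNmeas).inter hcond

lemma isProbabilityMeasure_uniform : IsProbabilityMeasure (volume.restrict (Icc (0:ℝ) 1)) := by
  constructor
  rw [Measure.restrict_apply_univ, Real.volume_Icc]
  norm_num

lemma map_qf (η : Kernel E₂ ℝ) [IsMarkovKernel η] (z : E₂) :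
    Measure.map (fun u => qf η (z, u)) (volume.restrict (Icc (0:ℝ) 1)) = η z := by
  haveI := isProbabilityMeasure_uniform
  have hqz : Measurable (fun u => qf η (z, u)) :=
    (measurable_qf η).comp measurable_prodMk_left
  haveI : IsProbabilityMeasure (Measure.map (fun u => qf η (z, u))
      (volume.restrict (Icc (0:ℝ) 1))) := Measure.isProbabilityMeasure_map hqz.aemeasurable
  refine Measure.ext_of_Iic _ _ fun x => ?_
  rw [Measure.map_apply hqz measurableSet_Iic, Measure.restrict_apply (hqz measurableSet_Iic)]
  have hfin : η z (Iic x) ≠ ⊤ := measure_ne_top _ _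
  set c := (η z (Iic x)).toReal with hc
  have hc1 : c ≤ 1 := by
    rw [hc]
    exact ENNReal.toReal_le_of_le_ofReal zero_le_one (by simpa using prob_le_one)
  have hc0 : 0 ≤ c := ENNReal.toReal_nonneg
  have hae : ((fun u => qf η (z, u)) ⁻¹' Iic x ∩ Icc (0:ℝ) 1 : Set ℝ)
      =ᵐ[volume] (Icc (0:ℝ) c : Set ℝ) := by
    have hnull : (volume : Measure ℝ) ({0, 1} : Set ℝ) = 0 := by
      rw [show ({0, 1} : Set ℝ) = {0} ∪ {1} from rfl]
      exact measure_union_null Real.volume_singleton Real.volume_singleton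
    have h01 : ∀ᵐ u : ℝ ∂volume, u ∈ (({0, 1} : Set ℝ))ᶜ := compl_mem_ae_iff.2 hnull
    filter_upwards [h01] with u hu01
    simp only [mem_compl_iff, mem_insert_iff, mem_singleton_iff, not_or] at hu01
    obtain ⟨hu0, hu1⟩ := hu01
    simp only [eq_iff_iff, mem_inter_iff, mem_preimage, mem_Iic, mem_Icc]
    constructor
    · rintro ⟨hqle, h0u, hu1'⟩
      have hupos : 0 < u := lt_of_le_of_ne h0u (Ne.symm hu0)
      have hult : u < 1 := lt_of_le_of_ne hu1' hu1
      have hne : {y : ℝ | ENNReal.ofReal u ≤ η z (Iic y)}.Nonempty := by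
        have htend : Filter.Tendsto (fun y : ℝ => η z (Iic y)) Filter.atTop
            (nhds (η z univ)) := tendsto_measure_Iic_atTop _
        rw [measure_univ] at htend
        have hlt : ENNReal.ofReal u < 1 := by
          rw [← ENNReal.ofReal_one]
          exact ENNReal.ofReal_lt_ofReal_iff_of_nonneg hupos.le |>.2 hult
        obtain ⟨y, hy⟩ := (htend.eventually_const_lt hlt).exists
        exact ⟨y, hy.le⟩
      have := (qf_le_iff η z hupos hne).1 hqle
      exact ⟨h0u, (ENNReal.ofReal_le_iff_le_toReal hfin).1 this⟩
    · rintro ⟨h0u, huc⟩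
      have hupos : 0 < u := lt_of_le_of_ne h0u (Ne.symm hu0)
      have hcond : ENNReal.ofReal u ≤ η z (Iic x) := by
        calc ENNReal.ofReal u ≤ ENNReal.ofReal c := ENNReal.ofReal_le_ofReal huc
        _ = η z (Iic x) := by rw [hc, ENNReal.ofReal_toReal hfin]
      have hne : {y : ℝ | ENNReal.ofReal u ≤ η z (Iic y)}.Nonempty := ⟨x, hcond⟩
      exact ⟨(qf_le_iff η z hupos hne).2 hcond, h0u, huc.trans hc1⟩
  rw [measure_congr hae, Real.volume_Icc]
  rw [hc]
  simp [ENNReal.ofReal_toReal hfin]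

end Stmt13Aux

/-- Given random variables `X : Ω → E₁` (with `E₁` standard Borel) and
`Z : Ω → E₂` on a probability space, there is a jointly measurable
`F : E₂ × [0,1] → E₁` such that whenever `U` is uniform on `[0,1]` and independent of
a copy `Z'` of `Z`, the pair `(F(Z',U), Z')` has the same law as `(X, Z)`. -/
theorem stmt_13 {Ω E₁ E₂ : Type*} [MeasureSpace Ω]
    [IsProbabilityMeasure (ℙ : Measure Ω)]
    [MeasurableSpace E₁] [StandardBorelSpace E₁] [Nonempty E₁]
    [MeasurableSpace E₂]
    (X : Ω → E₁) (Z : Ω → E₂) (hX : Measurable X) (hZ : Measurable Z) :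
    ∃ F : E₂ × ℝ → E₁, Measurable F ∧
      ∀ (Ω' : Type) (_ : MeasureSpace Ω'),
        IsProbabilityMeasure (ℙ : Measure Ω') →
        ∀ (Z' : Ω' → E₂) (U : Ω' → ℝ), Measurable Z' → Measurable U →
          Measure.map Z' (ℙ : Measure Ω') = Measure.map Z (ℙ : Measure Ω) →
          Measure.map U (ℙ : Measure Ω') = volume.restrict (Set.Icc (0 : ℝ) 1) →
          IndepFun U Z' (ℙ : Measure Ω') →
          Measure.map (fun ω => (F (Z' ω, U ω), Z' ω)) (ℙ : Measure Ω')
            = Measure.map (fun ω => (X ω, Z ω)) (ℙ : Measure Ω) := by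
  classical
  obtain ⟨e, he⟩ := MeasureTheory.exists_measurableEmbedding_real E₁
  obtain ⟨g, hg, hge⟩ := he.exists_measurable_extend measurable_id
    (fun _ => ⟨Classical.arbitrary E₁⟩)
  set κ : Kernel E₂ E₁ := condDistrib X Z ℙ with hκ
  set η : Kernel E₂ ℝ := κ.map e with hη
  haveI : IsMarkovKernel η := Kernel.IsMarkovKernel.map κ he.measurable
  set F : E₂ × ℝ → E₁ := fun p => g (Stmt13Aux.qf η p) with hF
  have hFmeas : Measurable F := hg.comp (Stmt13Aux.measurable_qf η)
  set ν : Measure ℝ := volume.restrict (Set.Icc (0:ℝ) 1) with hν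
  haveI : IsProbabilityMeasure ν := Stmt13Aux.isProbabilityMeasure_uniform
  -- key: for each z, map (F (z, ·)) ν = κ z
  have hkey : ∀ z : E₂, Measure.map (fun u => F (z, u)) ν = κ z := by
    intro z
    have hqz : Measurable (fun u => Stmt13Aux.qf η (z, u)) :=
      (Stmt13Aux.measurable_qf η).comp measurable_prodMk_left
    have h1 : Measure.map (fun u => F (z, u)) ν
        = Measure.map g (Measure.map (fun u => Stmt13Aux.qf η (z, u)) ν) := by
      rw [Measure.map_map hg hqz]
      rfl
    rw [h1, Stmt13Aux.map_qf η z, hη, Kernel.map_apply κ he.measurable,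
      Measure.map_map hg he.measurable]
    have : g ∘ e = id := hge
    rw [this, Measure.map_id]
  refine ⟨F, hFmeas, ?_⟩
  intro Ω' mΩ' hP' Z' U hZ' hU hmapZ hmapU hindep
  -- disintegration of the law of (Z, X)
  set ρ : Measure (E₂ × E₁) := Measure.map (fun ω => (Z ω, X ω)) ℙ with hρ
  haveI : IsProbabilityMeasure ρ := Measure.isProbabilityMeasure_map (hZ.prodMk hX).aemeasurable
  have hdis : (Measure.map Z (ℙ : Measure Ω)) ⊗ₘ κ = ρ := by
    have h1 : ρ.fst = Measure.map Z ℙ := Measure.fst_map_prodMk hX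
    have h2 : κ = ρ.condKernel := by rw [hκ, condDistrib_def]
    rw [h2, ← h1]
    exact ρ.disintegrate ρ.condKernel
  set μZ : Measure E₂ := Measure.map Z (ℙ : Measure Ω) with hμZ
  haveI : IsProbabilityMeasure μZ := Measure.isProbabilityMeasure_map hZ.aemeasurable
  -- rewrite the left-hand side
  have hprod : Measure.map (fun ω => (Z' ω, U ω)) (ℙ : Measure Ω') = μZ.prod ν := by
    rw [(indepFun_iff_map_prod_eq_prod_map_map hZ'.aemeasurable hU.aemeasurable).1 hindep.symm,
      hmapZ, hmapU]
  have hLHS : Measure.map (fun ω => (F (Z' ω, U ω), Z' ω)) (ℙ : Measure Ω')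
      = Measure.map (fun p : E₂ × ℝ => (F p, p.1)) (μZ.prod ν) := by
    rw [← hprod, Measure.map_map (hFmeas.prodMk measurable_fst) (hZ'.prodMk hU)]
    rfl
  have hRHS : Measure.map (fun ω => (X ω, Z ω)) (ℙ : Measure Ω)
      = Measure.map Prod.swap ρ := by
    rw [hρ, Measure.map_map measurable_swap (hZ.prodMk hX)]
    rfl
  rw [hLHS, hRHS, ← hdis]
  -- both are probability measures on E₁ × E₂; compare on rectangles
  haveI : IsMarkovKernel κ := by rw [hκ]; infer_instance
  haveI : IsProbabilityMeasure (μZ ⊗ₘ κ) := by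
    constructor
    rw [Measure.compProd_apply_univ]
    exact measure_univ
  haveI h1 : IsProbabilityMeasure (Measure.map (fun p : E₂ × ℝ => (F p, p.1)) (μZ.prod ν)) :=
    Measure.isProbabilityMeasure_map (hFmeas.prodMk measurable_fst).aemeasurable
  refine MeasureTheory.ext_of_generate_finite
    (Set.image2 (· ×ˢ ·) {s : Set E₁ | MeasurableSet s} {t : Set E₂ | MeasurableSet t})
    generateFrom_prod.symm isPiSystem_prod ?_ ?_
  swap
  · rw [h1.measure_univ, Measure.map_apply measurable_swap MeasurableSet.univ,
      Set.preimage_univ, measure_univ]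
  rintro _ ⟨s, hs, t, ht, rfl⟩
  rw [Measure.map_apply (hFmeas.prodMk measurable_fst) (hs.prod ht),
    Measure.map_apply measurable_swap ((hs.prod ht)),
    Set.preimage_swap_prod,
    Measure.compProd_apply_prod ht hs]
  have hpre : (fun p : E₂ × ℝ => (F p, p.1)) ⁻¹' (s ×ˢ t)
      = {p : E₂ × ℝ | F p ∈ s ∧ p.1 ∈ t} := rfl
  rw [hpre, Measure.prod_apply]
  swap
  · exact (hFmeas hs).inter (measurable_fst ht)
  have hslice : ∀ z : E₂, ν (Prod.mk z ⁻¹' {p : E₂ × ℝ | F p ∈ s ∧ p.1 ∈ t})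
      = t.indicator (fun z => κ z s) z := by
    intro z
    by_cases hzt : z ∈ t
    · have : Prod.mk z ⁻¹' {p : E₂ × ℝ | F p ∈ s ∧ p.1 ∈ t} = (fun u => F (z, u)) ⁻¹' s := by
        ext u; simp [hzt]
      rw [this, Set.indicator_of_mem hzt, ← hkey z,
        Measure.map_apply (f := fun u => F (z, u)) (hFmeas.comp measurable_prodMk_left) hs]
    · have : Prod.mk z ⁻¹' {p : E₂ × ℝ | F p ∈ s ∧ p.1 ∈ t} = ∅ := by
        ext u; simp [hzt]
      rw [this, Set.indicator_of_notMem hzt, measure_empty]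
  rw [lintegral_congr hslice, lintegral_indicator ht]
end
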